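/- For p with Re(p²) > 0, a, b > 0, and Re ν > -1, ∫₀^∞ e^{-p x²} x^{ν+2r+1} J_{ν+2r}(x√(a²+b²)) dx = (a²+b²)^{ν/2+r}/(2p)^{ν+2r+1} · exp(-(a²+b²)/(4p)), for every nonnegative integer r. -/

import Mathlib

open Real Complex MeasureTheory
open Set Filter Topology Metric


lemma cpow_pos_eq {r : ℝ} (hr : 0 < r) (w : ℂ) :
    (r : ℂ) ^ w = Complex.exp ((Real.log r : ℂ) * w) := by
  rw [Complex.cpow_def_of_ne_zero (by exact_mod_cast hr.ne'), Complex.ofReal_log hr.le]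

lemma ofReal_mul_cpow {r : ℝ} (hr : 0 < r) {z : ℂ} (hz : z ≠ 0) (s : ℂ) :
    ((r : ℂ) * z) ^ s = (r : ℂ) ^ s * z ^ s := by
  rw [Complex.cpow_def_of_ne_zero (mul_ne_zero (by exact_mod_cast hr.ne') hz),
    Complex.log_ofReal_mul hr hz, cpow_pos_eq hr, Complex.cpow_def_of_ne_zero hz,
    add_mul, Complex.exp_add]

lemma integrableOn_cpow_cexp {a : ℂ} (ha : 0 < a.re) {p : ℂ} (hp : 0 < p.re) :
    IntegrableOn (fun t : ℝ => (t:ℂ) ^ (a-1) * Complex.exp (-(p * t))) (Ioi 0) := by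
  have hmeas : AEStronglyMeasurable (fun t : ℝ => (t:ℂ) ^ (a-1) * Complex.exp (-(p * t)))
      (volume.restrict (Ioi 0)) := by
    apply ContinuousOn.aestronglyMeasurable ?_ measurableSet_Ioi
    intro t ht
    exact ((Complex.continuousAt_ofReal_cpow_const t _ (Or.inr (ne_of_gt ht))).mul
      (Complex.continuous_exp.comp (by fun_prop : Continuous fun t : ℝ => -(p * t))).continuousAt).continuousWithinAt
  refine Integrable.mono' (g := fun t : ℝ => t ^ (a.re - 1) * Real.exp (-p.re * t)) ?_ hmeas ?_
  · have := integrableOn_rpow_mul_exp_neg_mul_rpow (p := 1) (s := a.re - 1) (b := p.re)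
      (by linarith) one_pos hp
    simpa [Real.rpow_one, IntegrableOn] using this
  · filter_upwards [ae_restrict_mem measurableSet_Ioi] with t ht
    rw [norm_mul, Complex.norm_exp,
      Complex.norm_cpow_eq_rpow_re_of_pos ht]
    simp [Complex.sub_re, Complex.mul_re]




lemma integral_cpow_mul_cexp_neg_mul_Ioi {a : ℂ} (ha : 0 < a.re) :
    ∀ p : ℂ, 0 < p.re →
      ∫ t : ℝ in Ioi 0, (t:ℂ) ^ (a - 1) * Complex.exp (-(p * t)) = (1/p) ^ a * Complex.Gamma a := by
  set U : Set ℂ := {z | 0 < z.re} with hUdef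
  have hUo : IsOpen U := isOpen_lt continuous_const Complex.continuous_re
  set F : ℂ → ℂ := fun p => ∫ t : ℝ in Ioi 0, (t:ℂ) ^ (a - 1) * Complex.exp (-(p * t)) with hFdef
  set G : ℂ → ℂ := fun p => (1/p) ^ a * Complex.Gamma a with hGdef
  suffices h : EqOn F G U from fun p hp => h hp
  have hFd : ∀ p ∈ U, DifferentiableAt ℂ F p := by
    intro p₀ hp₀
    have hp₀' : 0 < p₀.re := hp₀
    set ε := p₀.re / 2 with hε
    have hε0 : 0 < ε := by positivity
    have hmeas : ∀ q : ℂ, 0 < q.re → AEStronglyMeasurable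
        (fun t : ℝ => (t:ℂ) ^ (a - 1) * Complex.exp (-(q * t))) (volume.restrict (Ioi 0)) :=
      fun q hq => (integrableOn_cpow_cexp ha hq).aestronglyMeasurable
    have key := hasDerivAt_integral_of_dominated_loc_of_deriv_le (μ := volume.restrict (Ioi 0))
      (F := fun q (t:ℝ) => (t:ℂ) ^ (a - 1) * Complex.exp (-(q * t)))
      (F' := fun q (t:ℝ) => (t:ℂ) ^ (a - 1) * (Complex.exp (-(q * t)) * (-(t:ℂ))))
      (x₀ := p₀) (bound := fun t : ℝ => t ^ a.re * Real.exp (-ε * t)) (Metric.ball_mem_nhds p₀ hε0)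
      ?_ (integrableOn_cpow_cexp ha hp₀') ?_ ?_ ?_ ?_
    · exact key.2.differentiableAt
    · filter_upwards [eventually_nhds_iff.mpr ⟨{z | 0 < z.re}, fun z hz => hz,
        isOpen_lt continuous_const Complex.continuous_re, hp₀'⟩] with q hq
      exact hmeas q hq
    · apply ContinuousOn.aestronglyMeasurable ?_ measurableSet_Ioi
      intro t ht
      refine ((Complex.continuousAt_ofReal_cpow_const t _ (Or.inr (ne_of_gt ht))).mul
        (((Complex.continuous_exp.comp (by fun_prop : Continuous fun t : ℝ => -(p₀ * t))).mul
          (by fun_prop)).continuousAt)).continuousWithinAt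
    · filter_upwards [ae_restrict_mem measurableSet_Ioi] with t ht
      intro q hq
      have hqre : ε ≤ q.re := by
        have := Complex.abs_re_le_norm (q - p₀)
        have hd : dist q p₀ < ε := Metric.mem_ball.mp hq
        rw [Complex.dist_eq] at hd
        have : |q.re - p₀.re| < ε := by
          simpa [Complex.sub_re] using lt_of_le_of_lt this hd
        have := abs_lt.mp this
        simp only [hε] at *
        linarith [this.1]
      rw [norm_mul, norm_mul,
        Complex.norm_cpow_eq_rpow_re_of_pos ht, Complex.norm_exp]
      have h1 : ‖(-(t:ℂ))‖ = t := by
        simp [abs_of_pos (show (0:ℝ) < t from ht)]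
      rw [h1]
      have : (-(q * (t:ℂ))).re = -(q.re * t) := by simp [Complex.mul_re]
      rw [this]
      have ht' : (0:ℝ) < t := ht
      have hpow : t ^ ((a-1).re) * (Real.exp (-(q.re * t)) * t) = t ^ a.re * Real.exp (-(q.re*t)) := by
        rw [Complex.sub_re, Complex.one_re, Real.rpow_sub ht', Real.rpow_one]
        field_simp
      rw [hpow]
      have : Real.exp (-(q.re * t)) ≤ Real.exp (-ε * t) := by
        apply Real.exp_le_exp.mpr
        nlinarith [mul_le_mul_of_nonneg_right hqre ht'.le]
      exact mul_le_mul_of_nonneg_left this (Real.rpow_nonneg ht.le _)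
    · have := integrableOn_rpow_mul_exp_neg_mul_rpow (p := 1) (s := a.re) (b := ε)
        (by linarith) one_pos hε0
      simpa [Real.rpow_one, IntegrableOn] using this
    · filter_upwards [ae_restrict_mem measurableSet_Ioi] with t _
      intro q _
      have h1 : HasDerivAt (fun q : ℂ => -(q * t)) (-(t:ℂ)) q := by
        exact (hasDerivAt_mul_const (x := q) (t:ℂ)).neg
      simpa using (h1.cexp).const_mul ((t:ℂ) ^ (a-1))
  have hGd : ∀ p ∈ U, DifferentiableAt ℂ G p := by
    intro p hp
    have hp' : 0 < p.re := hp
    have hp0 : p ≠ 0 := fun h => by simp [h] at hp'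
    have h1 : DifferentiableAt ℂ (fun p : ℂ => 1/p) p :=
      (differentiableAt_const 1).div differentiableAt_id hp0
    have h2 : (1/p) ∈ Complex.slitPlane := by
      left
      rw [one_div, Complex.inv_re]
      exact div_pos hp' (Complex.normSq_pos.mpr hp0)
    exact ((h1.cpow (differentiableAt_const a) h2).mul_const _)
  have hFdo : DifferentiableOn ℂ F U := fun p hp => (hFd p hp).differentiableWithinAt
  have hGdo : DifferentiableOn ℂ G U := fun p hp => (hGd p hp).differentiableWithinAt
  have hFa : AnalyticOnNhd ℂ F U := hFdo.analyticOnNhd hUo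
  have hGa : AnalyticOnNhd ℂ G U := hGdo.analyticOnNhd hUo
  have hreal : ∀ r : ℝ, 0 < r → F r = G r := by
    intro r hr
    simp only [hFdef, hGdef]
    exact Complex.integral_cpow_mul_exp_neg_mul_Ioi ha hr
  have htends : Tendsto (fun n : ℕ => ((1 + ((n:ℝ)+1)⁻¹ : ℝ) : ℂ)) atTop (𝓝[≠] (1:ℂ)) := by
    apply tendsto_nhdsWithin_of_tendsto_nhds_of_eventually_within
    · have : Tendsto (fun n : ℕ => (1 + ((n:ℝ)+1)⁻¹ : ℝ)) atTop (𝓝 1) := by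
        have h0 : Tendsto (fun n : ℕ => (((n:ℝ)+1)⁻¹ : ℝ)) atTop (𝓝 0) :=
          tendsto_one_div_add_atTop_nhds_zero_nat.congr (by intro n; rw [one_div])
        simpa using tendsto_const_nhds.add h0
      simpa [Function.comp_def] using (Complex.continuous_ofReal.tendsto 1).comp this
    · filter_upwards with n
      simp only [Set.mem_compl_iff, Set.mem_singleton_iff]
      intro h
      have : (1 + ((n:ℝ)+1)⁻¹ : ℝ) = 1 := by exact_mod_cast h
      have hpos : (0:ℝ) < ((n:ℝ)+1)⁻¹ := by positivity
      linarith
  have hfreq : ∃ᶠ z in 𝓝[≠] (1:ℂ), F z = G z :=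
    htends.frequently (Frequently.of_forall fun n => hreal _ (by positivity))
  exact hFa.eqOn_of_preconnected_of_frequently_eq hGa
    (convex_halfSpace_re_gt 0).isPreconnected (by simp [hUdef] : (1:ℂ) ∈ U) hfreq






lemma gauss_cpow {s p : ℂ} (hs : 0 < s.re) (hp : 0 < p.re) :
    ∫ x : ℝ in Ioi 0, Complex.exp (-(p * (x:ℂ)^2)) * (x:ℂ) ^ (2*s - 1)
      = (1/p) ^ s * Complex.Gamma s / 2 := by
  have h := integral_comp_rpow_Ioi
    (fun t : ℝ => (t:ℂ) ^ (s - 1) * Complex.exp (-(p * t))) (p := 2) two_ne_zero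
  rw [integral_cpow_mul_cexp_neg_mul_Ioi hs p hp] at h
  have h2 : ∫ x : ℝ in Ioi 0, (|(2:ℝ)| * x ^ ((2:ℝ) - 1)) •
      ((((x ^ (2:ℝ) : ℝ)):ℂ) ^ (s - 1) * Complex.exp (-(p * ((x ^ (2:ℝ) : ℝ):ℂ))))
      = ∫ x : ℝ in Ioi 0, (2:ℂ) * (Complex.exp (-(p * (x:ℂ)^2)) * (x:ℂ) ^ (2*s - 1)) := by
    refine setIntegral_congr_fun measurableSet_Ioi (fun x hx => ?_)
    have hx' : (0:ℝ) < x := hx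
    have hsq : (x ^ (2:ℝ) : ℝ) = x ^ 2 := by
      rw [show (2:ℝ) = ((2:ℕ):ℝ) by norm_num, Real.rpow_natCast]
    have hxC : (x:ℂ) = Complex.exp ((Real.log x : ℂ)) := by
      rw [← Complex.ofReal_exp, Real.exp_log hx']
    have hb1 : ((x ^ (2:ℝ) : ℝ):ℂ) ^ (s-1) = Complex.exp ((Real.log x : ℂ) * (2*s - 2)) := by
      rw [hsq, cpow_pos_eq (by positivity) (s-1)]
      congr 1
      rw [Real.log_pow]
      push_cast
      ring
    have hb2 : (x:ℂ) ^ (2*s-1) = Complex.exp ((Real.log x : ℂ) * (2*s - 1)) :=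
      cpow_pos_eq hx' _
    rw [hb1, hb2, hsq]
    push_cast
    rw [abs_of_pos (by norm_num : (0:ℝ) < 2)]
    norm_num [Real.rpow_one]
    have hkey : (x:ℂ) * Complex.exp ((Real.log x : ℂ) * (2*s - 2))
        = Complex.exp ((Real.log x : ℂ) * (2*s - 1)) := by
      rw [hxC, ← Complex.exp_add]
      congr 1
      ring
    linear_combination (2 * Complex.exp (-(p * (x:ℂ)^2))) * hkey
  rw [h2, integral_const_mul] at h
  rw [← h]
  ring
lemma termwise {μ : ℂ} (hμ : -1 < μ.re) {p : ℂ} (hp : 0 < p.re) {c : ℝ} (hc : 0 < c) (m : ℕ) :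
    ∫ x : ℝ in Ioi 0, Complex.exp (-(p * (x:ℂ)^2)) * (x:ℂ) ^ (μ + 1) *
        ((c:ℂ) * x / 2) ^ (2*(m:ℂ) + μ)
      = ((c/2 : ℝ):ℂ) ^ (2*(m:ℂ) + μ) *
          ((1/p) ^ ((m:ℂ) + μ + 1) * Complex.Gamma ((m:ℂ)+μ+1) / 2) := by
  have hsre : 0 < ((m:ℂ) + μ + 1).re := by
    simp only [Complex.add_re, Complex.natCast_re, Complex.one_re]
    have : (0:ℝ) ≤ m := Nat.cast_nonneg m
    linarith
  have h2 : ∫ x : ℝ in Ioi 0, Complex.exp (-(p * (x:ℂ)^2)) * (x:ℂ) ^ (μ + 1) *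
        ((c:ℂ) * x / 2) ^ (2*(m:ℂ) + μ)
      = ∫ x : ℝ in Ioi 0, ((c/2 : ℝ):ℂ) ^ (2*(m:ℂ) + μ) *
          (Complex.exp (-(p * (x:ℂ)^2)) * (x:ℂ) ^ (2*((m:ℂ) + μ + 1) - 1)) := by
    refine setIntegral_congr_fun measurableSet_Ioi (fun x hx => ?_)
    have hx' : (0:ℝ) < x := hx
    have hbase : (c:ℂ) * x / 2 = ((c/2 : ℝ):ℂ) * (x:ℝ) := by push_cast; ring
    rw [hbase, mul_cpow_ofReal_nonneg (by positivity) hx'.le]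
    have hxp : (x:ℂ) ^ (μ+1) * (x:ℂ) ^ (2*(m:ℂ) + μ) = (x:ℂ) ^ (2*((m:ℂ) + μ + 1) - 1) := by
      rw [← Complex.cpow_add _ _ (by exact_mod_cast hx'.ne')]
      ring_nf
    rw [← hxp]
    ring
  rw [h2, integral_const_mul, gauss_cpow hsre hp]


lemma alg_aux (q P Γ F A Bc : ℂ) (hΓ : Γ ≠ 0) (hF : F ≠ 0) (m : ℕ) :
    (-1)^m / (F * Γ) * ((q^(2*m) * A) * ((P^m * Bc) * Γ / 2)) = (-(q^2*P))^m / F * (A * Bc / 2) := by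
  have key : (-(q^2*P))^m = (-1)^m * (q^(2*m) * P^m) := by
    rw [neg_pow, mul_pow, ← pow_mul]
  rw [key]
  field_simp

/-- Bessel function of the first kind, `J_μ(x) = Σ (-1)^m/(m! Γ(m+μ+1)) (x/2)^{2m+μ}`. -/
noncomputable def besselJ (μ : ℂ) (x : ℂ) : ℂ :=
  ∑' m : ℕ, ((-1)^m / ((m.factorial : ℂ) * Complex.Gamma ((m : ℂ) + μ + 1))) *
    (x/2) ^ (2*(m:ℂ) + μ)







theorem gaussian_bessel_integral (a b : ℝ) (ha : 0 < a) (hb : 0 < b) (r : ℕ)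
    (ν : ℂ) (hν : -1 < ν.re) (p : ℂ) (hp : 0 < p.re) :
    ∫ x in Set.Ioi (0:ℝ),
        Complex.exp (-p * (x:ℂ)^2) * (x:ℂ) ^ (ν + 2*(r:ℂ) + 1) *
          besselJ (ν + 2*(r:ℂ)) ((Real.sqrt (a^2 + b^2) : ℂ) * x)
      = ((a:ℂ)^2 + (b:ℂ)^2) ^ (ν/2 + (r:ℂ)) / (2*p) ^ (ν + 2*(r:ℂ) + 1) *
        Complex.exp (-((a:ℂ)^2 + (b:ℂ)^2) / (4*p)) := by
  set μ : ℂ := ν + 2*(r:ℂ) with hμdef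
  have hμ : -1 < μ.re := by
    have : μ.re = ν.re + 2*r := by simp [hμdef]
    rw [this]
    have : (0:ℝ) ≤ 2*r := by positivity
    linarith
  set c : ℝ := Real.sqrt (a^2 + b^2) with hcdef
  have hc : 0 < c := Real.sqrt_pos.mpr (by positivity)
  have hc2 : c^2 = a^2 + b^2 := Real.sq_sqrt (by positivity)
  set d : ℝ := μ.re with hddef
  have hp0 : p ≠ 0 := fun h => by simp [h] at hp
  have hinv0 : (1/p : ℂ) ≠ 0 := one_div_ne_zero hp0
  have hGre : ∀ m : ℕ, 0 < ((m:ℂ) + μ + 1).re := by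
    intro m
    simp only [Complex.add_re, Complex.natCast_re, Complex.one_re]
    have : (0:ℝ) ≤ m := Nat.cast_nonneg m
    linarith
  have hGne : ∀ m : ℕ, Complex.Gamma ((m:ℂ) + μ + 1) ≠ 0 := by
    intro m
    apply Complex.Gamma_ne_zero
    intro n h
    have := congrArg Complex.re h
    simp only [Complex.add_re, Complex.natCast_re, Complex.one_re, Complex.neg_re] at this
    have h1 : (0:ℝ) ≤ m := Nat.cast_nonneg m
    have h2 : (0:ℝ) ≤ n := Nat.cast_nonneg n
    linarith
  -- the summands
  set K : ℕ → ℂ := fun m => ((-1)^m / ((m.factorial : ℂ) * Complex.Gamma ((m : ℂ) + μ + 1)))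
    with hKdef
  set f : ℕ → ℝ → ℂ := fun m x => Complex.exp (-p * (x:ℂ)^2) * (x:ℂ) ^ (μ + 1) *
    (K m * ((c*x/2 : ℝ):ℂ) ^ (2*(m:ℂ) + μ)) with hfdef
  have hBJ : ∀ x : ℝ, Complex.exp (-p * (x:ℂ)^2) * (x:ℂ) ^ (μ + 1) *
      besselJ μ ((c:ℂ) * x) = ∑' m, f m x := by
    intro x
    have hb : ((c:ℂ) * x)/2 = ((c*x/2 : ℝ):ℂ) := by push_cast; ring
    have : besselJ μ ((c:ℂ) * x) = ∑' m, K m * ((c*x/2 : ℝ):ℂ) ^ (2*(m:ℂ) + μ) := by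
      unfold besselJ
      rw [hb]
    rw [this, ← tsum_mul_left]
  -- norm identity
  set G : ℕ → ℝ → ℝ := fun m x =>
      (1 / (m.factorial * ‖(Complex.Gamma ((m:ℂ) + μ + 1))‖)) *
      ((c/2) ^ (2*(m:ℝ) + d) * (x ^ (2*(m:ℝ) + 2*d + 1) * Real.exp (-p.re * x ^ (2:ℝ))))
    with hGdef
  have hnorm : ∀ m : ℕ, ∀ x ∈ Ioi (0:ℝ), ‖f m x‖ = G m x := by
    intro m x hx
    have hx' : (0:ℝ) < x := hx
    have h1 : ‖Complex.exp (-p * (x:ℂ)^2)‖ = Real.exp (-p.re * x ^ (2:ℝ)) := by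
      rw [Complex.norm_exp]
      congr 1
      rw [Real.rpow_two]
      simp [Complex.mul_re, ← Complex.ofReal_pow]
    have h2 : ‖(x:ℂ) ^ (μ + 1)‖ = x ^ (d + 1) := by
      rw [Complex.norm_cpow_eq_rpow_re_of_pos hx']
      simp [hddef]
    have h3 : ‖K m‖ = 1 / (m.factorial * ‖(Complex.Gamma ((m:ℂ) + μ + 1))‖) := by
      rw [hKdef]
      simp only [norm_div, norm_mul, norm_pow, norm_neg, norm_one,
        one_pow, Complex.norm_natCast]
    have h4 : ‖((c*x/2 : ℝ):ℂ) ^ (2*(m:ℂ) + μ)‖ = (c/2)^(2*(m:ℝ)+d) * x ^ (2*(m:ℝ)+d) := by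
      rw [Complex.norm_cpow_eq_rpow_re_of_pos (by positivity)]
      have : (2*(m:ℂ) + μ).re = 2*(m:ℝ) + d := by simp [hddef]
      rw [this, show c*x/2 = (c/2)*x by ring, Real.mul_rpow (by positivity) hx'.le]
    rw [hfdef]
    simp only [norm_mul]
    rw [h1, h2, h3, h4]
    simp only [hGdef]
    have h5 : x ^ (d+1) * x ^ (2*(m:ℝ)+d) = x ^ (2*(m:ℝ) + 2*d + 1) := by
      rw [← Real.rpow_add hx']
      ring_nf
    rw [← h5]
    ring
  -- integrability of G m
  have hGint : ∀ m : ℕ, IntegrableOn (G m) (Ioi 0) := by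
    intro m
    have h0 := (integrableOn_rpow_mul_exp_neg_mul_rpow (s := 2*(m:ℝ)+2*d+1) (p := (2:ℝ))
      (b := p.re) (by linarith) two_pos hp).const_mul
      ((1 / (m.factorial * ‖(Complex.Gamma ((m:ℂ) + μ + 1))‖)) * (c/2)^(2*(m:ℝ)+d))
    simpa [hGdef, mul_assoc, IntegrableOn] using h0
  -- integrability of f m
  have hfint : ∀ m : ℕ, IntegrableOn (f m) (Ioi 0) := by
    intro m
    refine Integrable.mono' (hGint m) ?_ ?_
    · apply ContinuousOn.aestronglyMeasurable ?_ measurableSet_Ioi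
      intro x hx
      have hx' : (0:ℝ) < x := hx
      have c1 : ContinuousWithinAt (fun x : ℝ => (x:ℂ) ^ (μ+1)) (Ioi 0) x :=
        (Complex.continuousAt_ofReal_cpow_const x _ (Or.inr hx'.ne')).continuousWithinAt
      have c2 : ContinuousWithinAt (fun x : ℝ => ((c*x/2 : ℝ):ℂ) ^ (2*(m:ℂ)+μ)) (Ioi 0) x := by
        have := (Complex.continuousAt_ofReal_cpow_const (c*x/2) (2*(m:ℂ)+μ)
          (Or.inr (by positivity))).comp (f := fun x : ℝ => c*x/2)
          (by fun_prop : Continuous fun x : ℝ => c*x/2).continuousAt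
        exact this.continuousWithinAt
      exact (((by fun_prop : Continuous fun x : ℝ => Complex.exp (-p * (x:ℂ)^2)).continuousWithinAt).mul
        c1).mul (continuousWithinAt_const.mul c2)
    · filter_upwards [ae_restrict_mem measurableSet_Ioi] with x hx
      exact (hnorm m x hx).le
  -- value of the integral of the norm
  set B : ℕ → ℝ := fun m =>
      (1 / (m.factorial * ‖(Complex.Gamma ((m:ℂ) + μ + 1))‖)) *
      ((c/2) ^ (2*(m:ℝ) + d) * (p.re ^ (-((m:ℝ)+d+1)) * (1/2) * Real.Gamma ((m:ℝ)+d+1)))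
    with hBdef
  have hfnormval : ∀ m : ℕ, (∫ x in Ioi 0, ‖f m x‖) = B m := by
    intro m
    rw [setIntegral_congr_fun measurableSet_Ioi (hnorm m)]
    simp only [hGdef, hBdef]
    rw [integral_const_mul, integral_const_mul,
      integral_rpow_mul_exp_neg_mul_rpow two_pos (by linarith) hp]
    rw [show (2*(m:ℝ)+2*d+1+1)/2 = (m:ℝ)+d+1 by ring,
      show -(2*(m:ℝ)+2*d+1+1)/2 = -((m:ℝ)+d+1) by ring]
  -- summability
  have hDpos : ∀ m : ℕ, (0:ℝ) < (m:ℝ)+d+1 := by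
    intro m
    have : (0:ℝ) ≤ m := Nat.cast_nonneg m
    linarith
  have habs_ge : ∀ m : ℕ, (m:ℝ)+d+1 ≤ ‖((m:ℂ)+μ+1)‖ := by
    intro m
    have h := Complex.re_le_norm ((m:ℂ)+μ+1)
    simpa [hddef] using h
  have hBpos : ∀ m : ℕ, 0 < B m := by
    intro m
    rw [hBdef]
    have hΓ : 0 < Real.Gamma ((m:ℝ)+d+1) := Real.Gamma_pos_of_pos (hDpos m)
    have hfac : (0:ℝ) < m.factorial := by exact_mod_cast m.factorial_pos
    have habs : 0 < ‖(Complex.Gamma ((m:ℂ)+μ+1))‖ := by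
      simpa using (norm_pos_iff.mpr (hGne m))
    positivity
  set k : ℝ := (c/2)^(2:ℝ) * (p.re)⁻¹ with hkdef
  have hk : 0 < k := by positivity
  have hratio : ∀ m : ℕ, B (m+1) = B m *
      (k * ((m:ℝ)+d+1) / (((m:ℝ)+1) * ‖((m:ℂ)+μ+1)‖)) := by
    intro m
    have e1 : (((m+1:ℕ)):ℝ) = (m:ℝ)+1 := by push_cast; ring
    have hfac : ((m+1).factorial : ℝ) = ((m:ℝ)+1) * (m.factorial:ℝ) := by
      rw [Nat.factorial_succ]; push_cast; ring
    have hΓC : Complex.Gamma (((m+1:ℕ):ℂ)+μ+1) = ((m:ℂ)+μ+1) * Complex.Gamma ((m:ℂ)+μ+1) := by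
      rw [show ((m+1:ℕ):ℂ)+μ+1 = ((m:ℂ)+μ+1) + 1 by push_cast; ring]
      exact Complex.Gamma_add_one _ (fun h => by simpa [h] using (hGre m))
    have hΓR : Real.Gamma (((m+1:ℕ):ℝ)+d+1) = ((m:ℝ)+d+1) * Real.Gamma ((m:ℝ)+d+1) := by
      rw [e1, show (m:ℝ)+1+d+1 = ((m:ℝ)+d+1)+1 by ring, Real.Gamma_add_one (hDpos m).ne']
    have hcp : (c/2) ^ (2*(((m+1:ℕ)):ℝ)+d) = (c/2)^(2*(m:ℝ)+d) * (c/2)^(2:ℝ) := by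
      rw [e1, ← Real.rpow_add (by positivity)]; ring_nf
    have hpr : p.re ^ (-((((m+1:ℕ)):ℝ)+d+1)) = p.re ^ (-((m:ℝ)+d+1)) * (p.re)⁻¹ := by
      rw [e1, ← Real.rpow_neg_one p.re, ← Real.rpow_add hp]; ring_nf
    have habs0 : ‖((m:ℂ)+μ+1)‖ ≠ 0 := (lt_of_lt_of_le (hDpos m) (habs_ge m)).ne'
    have habsΓ : ‖(Complex.Gamma ((m:ℂ)+μ+1))‖ ≠ 0 := by
      simpa using (norm_pos_iff.mpr (hGne m)).ne'
    have hfac0 : (m.factorial : ℝ) ≠ 0 := by exact_mod_cast m.factorial_ne_zero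
    simp only [hBdef, hkdef]
    rw [hfac, hΓC, hΓR, hcp, hpr, norm_mul]
    field_simp
  have hBsum : Summable B := by
    apply summable_of_ratio_norm_eventually_le (r := 1/2) (by norm_num)
    filter_upwards [eventually_ge_atTop (⌈2*k⌉₊)] with m hm
    have hmk : 2*k ≤ (m:ℝ) := le_trans (Nat.le_ceil _) (by exact_mod_cast hm)
    rw [Real.norm_of_nonneg (hBpos (m+1)).le, Real.norm_of_nonneg (hBpos m).le, hratio m]
    have hD : 0 < ‖((m:ℂ)+μ+1)‖ := lt_of_lt_of_le (hDpos m) (habs_ge m)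
    have hm1 : (0:ℝ) < (m:ℝ)+1 := by positivity
    have hle : k * ((m:ℝ)+d+1) / (((m:ℝ)+1) * ‖((m:ℂ)+μ+1)‖) ≤ 1/2 := by
      rw [div_le_iff₀ (by positivity)]
      calc k * ((m:ℝ)+d+1) ≤ k * ‖((m:ℂ)+μ+1)‖ :=
            mul_le_mul_of_nonneg_left (habs_ge m) hk.le
        _ ≤ (((m:ℝ)+1)/2) * ‖((m:ℂ)+μ+1)‖ :=
            mul_le_mul_of_nonneg_right (by linarith) hD.le
        _ = 1/2 * (((m:ℝ)+1) * ‖((m:ℂ)+μ+1)‖) := by ring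
    calc B m * (k * ((m:ℝ)+d+1) / (((m:ℝ)+1) * ‖((m:ℂ)+μ+1)‖))
        ≤ B m * (1/2) := mul_le_mul_of_nonneg_left hle (hBpos m).le
      _ = 1/2 * B m := by ring
  have hsum : Summable fun m => ∫ x in Ioi (0:ℝ), ‖f m x‖ :=
    (summable_congr (fun m => hfnormval m)).mpr hBsum
  -- interchange sum and integral
  have hint : (∫ x in Ioi (0:ℝ), Complex.exp (-p * (x:ℂ)^2) * (x:ℂ) ^ (μ + 1) *
      besselJ μ ((c:ℂ) * x)) = ∑' m, ∫ x in Ioi (0:ℝ), f m x := by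
    rw [setIntegral_congr_fun measurableSet_Ioi (fun x _ => hBJ x)]
    exact (MeasureTheory.integral_tsum_of_summable_integral_norm hfint hsum).symm
  -- value of each integral
  have hval : ∀ m : ℕ, (∫ x in Ioi (0:ℝ), f m x) = K m * (((c/2 : ℝ):ℂ) ^ (2*(m:ℂ) + μ) *
      ((1/p) ^ ((m:ℂ) + μ + 1) * Complex.Gamma ((m:ℂ)+μ+1) / 2)) := by
    intro m
    have hrw : ∀ x : ℝ, f m x = K m * (Complex.exp (-(p * (x:ℂ)^2)) * (x:ℂ) ^ (μ + 1) *
        ((c:ℂ) * x / 2) ^ (2*(m:ℂ) + μ)) := by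
      intro x
      have hbase : (c:ℂ) * x / 2 = ((c*x/2 : ℝ):ℂ) := by push_cast; ring
      rw [hfdef]
      simp only [hbase, neg_mul]
      ring
    simp only [hrw]
    rw [MeasureTheory.integral_const_mul, termwise hμ hp hc m]
  set T : ℂ := ((c/2 : ℝ):ℂ) ^ μ * ((1/p) ^ (μ+1)) / 2 with hTdef
  set w : ℂ := -(((c/2 : ℝ):ℂ)^2 * (1/p)) with hwdef
  have hterm : ∀ m : ℕ, K m * (((c/2 : ℝ):ℂ) ^ (2*(m:ℂ) + μ) *
      ((1/p) ^ ((m:ℂ) + μ + 1) * Complex.Gamma ((m:ℂ)+μ+1) / 2)) = w^m / m.factorial * T := by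
    intro m
    have hc20 : ((c/2 : ℝ):ℂ) ≠ 0 := Complex.ofReal_ne_zero.mpr (by positivity)
    have h1 : ((c/2 : ℝ):ℂ)^(2*(m:ℂ)+μ) = (((c/2 : ℝ):ℂ))^(2*m) * ((c/2 : ℝ):ℂ)^μ := by
      rw [show (2*(m:ℂ)+μ) = ((2*m : ℕ):ℂ) + μ by push_cast; ring,
        Complex.cpow_add _ _ hc20, Complex.cpow_natCast]
    have h2 : (1/p : ℂ)^((m:ℂ)+μ+1) = (1/p : ℂ)^m * (1/p : ℂ)^(μ+1) := by
      rw [show ((m:ℂ)+μ+1) = ((m:ℕ):ℂ) + (μ+1) by push_cast; ring,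
        Complex.cpow_add _ _ hinv0, Complex.cpow_natCast]
    have hfac0 : (m.factorial : ℂ) ≠ 0 := Nat.cast_ne_zero.mpr m.factorial_ne_zero
    rw [hKdef, h1, h2, hTdef, hwdef]
    exact alg_aux _ _ _ _ _ _ (hGne m) hfac0 m
  have hExp : ∑' m : ℕ, w^m / (m.factorial : ℂ) = Complex.exp w := by
    rw [Complex.exp_eq_exp_ℂ, NormedSpace.exp_eq_tsum_div]
  have hsum2 : (∑' m, ∫ x in Ioi (0:ℝ), f m x) = Complex.exp w * T := by
    calc (∑' m, ∫ x in Ioi (0:ℝ), f m x) = ∑' m : ℕ, w^m / (m.factorial : ℂ) * T :=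
          tsum_congr (fun m => by rw [hval m, hterm m])
      _ = (∑' m : ℕ, w^m / (m.factorial : ℂ)) * T := tsum_mul_right
      _ = Complex.exp w * T := by rw [hExp]
  -- final constants
  have hcC : ((c:ℂ))^2 = (a:ℂ)^2 + (b:ℂ)^2 := by
    rw [show ((c:ℂ))^2 = ((c^2 : ℝ):ℂ) by push_cast; ring, hc2]
    push_cast
    ring
  have hwv : Complex.exp w = Complex.exp (-((a:ℂ)^2 + (b:ℂ)^2) / (4*p)) := by
    congr 1
    rw [hwdef, ← hcC]
    have : ((c/2 : ℝ):ℂ) = (c:ℂ)/2 := by push_cast; ring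
    rw [this, eq_div_iff (mul_ne_zero (by norm_num : (4:ℂ) ≠ 0) hp0)]
    calc -(((c:ℂ)/2)^2 * (1/p)) * (4*p) = -((c:ℂ)^2 * (p⁻¹ * p)) := by
          rw [one_div]; ring
      _ = -(c:ℂ)^2 := by rw [inv_mul_cancel₀ hp0, mul_one]
  have hargp : p.arg ≠ Real.pi := by
    intro h
    rw [Complex.arg_eq_pi_iff] at h
    linarith [h.1]
  have hpμ0 : (p:ℂ)^(μ+1) ≠ 0 := by
    rw [Complex.cpow_def_of_ne_zero hp0]
    exact Complex.exp_ne_zero _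
  have hTv : T = ((a:ℂ)^2 + (b:ℂ)^2) ^ (ν/2 + (r:ℂ)) / (2*p) ^ (μ + 1) := by
    rw [hTdef, ← hcC]
    have e0 : ((c:ℂ))^2 = ((c^2 : ℝ):ℂ) := by push_cast; ring
    have e1 : ((c^2 : ℝ):ℂ) ^ (ν/2 + (r:ℂ)) = Complex.exp ((Real.log c : ℂ) * μ) := by
      rw [cpow_pos_eq (by positivity) _]
      congr 1
      rw [show Real.log (c^2) = 2 * Real.log c by
        rw [show c^2 = c*c by ring, Real.log_mul hc.ne' hc.ne']; ring]
      rw [hμdef]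
      push_cast
      ring
    have e2 : ((c/2 : ℝ):ℂ) ^ μ = Complex.exp ((Real.log c - Real.log 2 : ℝ) * μ) := by
      rw [cpow_pos_eq (by positivity) _, Real.log_div hc.ne' two_ne_zero]
    have e3 : ((2:ℂ)*p) ^ (μ+1) = Complex.exp ((Real.log 2 : ℝ) * (μ+1)) * p^(μ+1) := by
      rw [show ((2:ℂ)*p) = ((2:ℝ):ℂ)*p by norm_num, ofReal_mul_cpow two_pos hp0,
        cpow_pos_eq two_pos]
    have e4 : (1/p : ℂ) ^ (μ+1) = (p^(μ+1))⁻¹ := by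
      rw [one_div, Complex.inv_cpow _ _ hargp]
    have e5 : (2:ℂ) = Complex.exp ((Real.log 2 : ℝ)) := by
      rw [← Complex.ofReal_exp, Real.exp_log two_pos]
      norm_num
    rw [e0, e1, e2, e3, e4]
    rw [e5]
    calc Complex.exp ((Real.log c - Real.log 2 : ℝ) * μ) * (p ^ (μ+1))⁻¹ /
          Complex.exp ((Real.log 2 : ℝ))
        = Complex.exp (((Real.log c - Real.log 2 : ℝ)) * μ - ((Real.log 2 : ℝ))) *
            (p ^ (μ+1))⁻¹ := by
          rw [Complex.exp_sub]; ring
      _ = Complex.exp (((Real.log c : ℝ)) * μ - ((Real.log 2 : ℝ)) * (μ+1)) *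
            (p ^ (μ+1))⁻¹ := by
          congr 2
          push_cast
          ring
      _ = Complex.exp (((Real.log c : ℝ)) * μ) /
            (Complex.exp (((Real.log 2 : ℝ)) * (μ+1)) * p^(μ+1)) := by
          rw [Complex.exp_sub]
          field_simp
  rw [hint, hsum2, hwv, hTv]
  ring
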